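/- arXiv:1810.05387 — 3 statements merged into one kernel-verified Lean document; each statement's English description precedes it below -/
import Mathlib

section
/- Let (X,d,μ) be a metric measure space in which every ball has positive finite measure, and let w be a nonnegative locally integrable function satisfying the reverse Hölder inequality (⨍_B w^q dμ)^{1/q} ≤ C ⨍_B w dμ for some q > 1, C > 0 on all balls B. Assume moreover that there is a constant B₀ such that μ(B ∖ τB) ≤ B₀ (1-τ) μ(B) for all balls B and all τ ∈ (0,1), where τB is the concentric ball with radius scaled by τ. Then the measure ω defined by dω = w dμ is doubling: there is θ > 0, depending only on q, C, B₀, such that ω(2B) ≤ θ ω(B) for every ball B. -/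
open Metric MeasureTheory

lemma aux_split_integral {X : Type*} [MeasurableSpace X] (μ : MeasureTheory.Measure X)
    (w : X → ℝ) (s t : Set X) (hw : ∀ x, 0 ≤ w x) (hts : t ⊆ s)
    (hi : MeasureTheory.IntegrableOn w s μ) :
    ∫ y in s, w y ∂μ ≤ (∫ y in t, w y ∂μ) + ∫ y in s \ t, w y ∂μ := by
  have hi1 : MeasureTheory.IntegrableOn w t μ := hi.mono_set hts
  have hi2 : MeasureTheory.IntegrableOn w (s \ t) μ := hi.mono_set Set.diff_subset
  have hcover : s ⊆ t ∪ (s \ t) := fun y hy => by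
    by_cases h : y ∈ t
    · exact Or.inl h
    · exact Or.inr ⟨hy, h⟩
  have hle : μ.restrict s ≤ μ.restrict t + μ.restrict (s \ t) :=
    le_trans (MeasureTheory.Measure.restrict_mono hcover le_rfl)
      (MeasureTheory.Measure.restrict_union_le _ _)
  have hfi : MeasureTheory.Integrable w (μ.restrict t + μ.restrict (s \ t)) :=
    MeasureTheory.Integrable.add_measure (μ := μ.restrict t) (ν := μ.restrict (s \ t)) hi1 hi2
  have h1 : (∫ y in s, w y ∂μ) ≤ ∫ y, w y ∂(μ.restrict t + μ.restrict (s \ t)) :=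
    MeasureTheory.integral_mono_measure (μ := μ.restrict s)
      (ν := μ.restrict t + μ.restrict (s \ t)) hle
      (Filter.Eventually.of_forall fun y => hw y) hfi
  have h2 : (∫ y, w y ∂(μ.restrict t + μ.restrict (s \ t))) = (∫ y in t, w y ∂μ) + ∫ y in s \ t, w y ∂μ :=
    MeasureTheory.integral_add_measure (μ := μ.restrict t) (ν := μ.restrict (s \ t)) hi1 hi2
  exact h2 ▸ h1

/-- In a metric measure space where balls have positive finite measure, if `w`
satisfies a reverse Hölder inequality with exponent `q > 1` and constant `C` on all balls, and the
annulus bound `μ(B ∖ τB) ≤ B₀ (1-τ) μ(B)` holds, then the measure `dω = w dμ` is doubling: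
`ω(2B) ≤ θ ω(B)` for every ball `B`, with `θ` depending only on `q, C, B₀`. -/
theorem stmt4 {X : Type*} [MetricSpace X] [MeasurableSpace X] (μ : Measure X)
    (w : X → ℝ) (q C B₀ : ℝ) (hq : 1 < q) (hC : 0 < C) (hB₀ : 0 < B₀)
    (hw : ∀ x, 0 ≤ w x)
    (hball : ∀ (x : X) (r : ℝ), 0 < r → 0 < μ (ball x r) ∧ μ (ball x r) < ⊤)
    (hint : ∀ (x : X) (r : ℝ), IntegrableOn w (ball x r) μ)
    (hintq : ∀ (x : X) (r : ℝ), IntegrableOn (fun y => w y ^ q) (ball x r) μ)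
    (hRH : ∀ (x : X) (r : ℝ), 0 < r →
      ((μ (ball x r)).toReal⁻¹ * ∫ y in ball x r, w y ^ q ∂μ) ^ (1 / q) ≤
        C * ((μ (ball x r)).toReal⁻¹ * ∫ y in ball x r, w y ∂μ))
    (hAnn : ∀ (x : X) (r τ : ℝ), 0 < r → 0 < τ → τ < 1 →
      μ (ball x r \ ball x (τ * r)) ≤ ENNReal.ofReal (B₀ * (1 - τ)) * μ (ball x r)) :
    ∃ θ > 0, ∀ (x : X) (r : ℝ), 0 < r →
      ∫ y in ball x (2 * r), w y ∂μ ≤ θ * ∫ y in ball x r, w y ∂μ := by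
  have hq0 : (0:ℝ) < q := lt_trans one_pos hq
  set p : ℝ := q / (q - 1) with hp_def
  have hconj : q.HolderConjugate p := Real.HolderConjugate.conjExponent hq
  have hp0 : 0 < p := hconj.symm.pos
  have hp0' : (0:ℝ) ≤ 1 / p := by positivity
  have hq0' : (0:ℝ) ≤ 1 / q := by positivity
  -- choose ε
  set ε : ℝ := min (1/2) ((2*C)⁻¹ ^ p / B₀) with hε_def
  have hε0 : 0 < ε := by
    apply lt_min (by norm_num)
    have : (0:ℝ) < (2*C)⁻¹ ^ p := Real.rpow_pos_of_pos (by positivity) _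
    positivity
  have hε2 : ε ≤ 1/2 := min_le_left _ _
  set τ : ℝ := 1 - ε with hτ_def
  have hτ0 : 0 < τ := by simp only [hτ_def]; linarith
  have hτ1 : τ < 1 := by simp only [hτ_def]; linarith
  -- main smallness bound
  have hsmall : C * (B₀ * ε) ^ (1/p) ≤ 1/2 := by
    have h1 : B₀ * ε ≤ (2*C)⁻¹ ^ p := by
      have := min_le_right (1/2 : ℝ) ((2*C)⁻¹ ^ p / B₀)
      calc B₀ * ε ≤ B₀ * ((2*C)⁻¹ ^ p / B₀) :=
            mul_le_mul_of_nonneg_left this hB₀.le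
        _ = (2*C)⁻¹ ^ p := by field_simp
    have h2 : (B₀ * ε) ^ (1/p) ≤ ((2*C)⁻¹ ^ p) ^ (1/p) :=
      Real.rpow_le_rpow (by positivity) h1 hp0'
    have h3 : ((2*C)⁻¹ ^ p : ℝ) ^ (1/p) = (2*C)⁻¹ := by
      rw [← Real.rpow_mul (by positivity), mul_one_div, div_self hp0.ne', Real.rpow_one]
    calc C * (B₀ * ε) ^ (1/p) ≤ C * (2*C)⁻¹ := by
          rw [← h3]; exact mul_le_mul_of_nonneg_left h2 hC.le
      _ = 1/2 := by field_simp
  -- key step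
  have key : ∀ (x : X) (r : ℝ), 0 < r →
      ∫ y in ball x r, w y ∂μ ≤ 2 * ∫ y in ball x (τ * r), w y ∂μ := by
    intro x r hr
    set B := ball x r
    set S : Set X := ball x r \ ball x (τ * r) with hS_def
    have hsub : ball x (τ * r) ⊆ B :=
      ball_subset_ball (by nlinarith)
    have hmfin : μ B < ⊤ := (hball x r hr).2
    set m : ℝ := (μ B).toReal with hm_def
    have hm0 : 0 < m := ENNReal.toReal_pos (hball x r hr).1.ne' hmfin.ne
    set I : ℝ := ∫ y in B, w y ∂μ with hI_def
    set Iq : ℝ := ∫ y in B, w y ^ q ∂μ with hIq_def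
    have hI0 : 0 ≤ I := integral_nonneg fun y => hw y
    have hIq0 : 0 ≤ Iq := integral_nonneg fun y => Real.rpow_nonneg (hw y) q
    -- split the integral (subadditively, to avoid measurability of balls)
    have hSsub : S ⊆ B := Set.diff_subset
    have hsplit : I ≤ (∫ y in ball x (τ * r), w y ∂μ) + ∫ y in S, w y ∂μ :=
      aux_split_integral μ w B (ball x (τ * r)) hw hsub (hint x r)
    have hμS_fin : μ S < ⊤ := lt_of_le_of_lt (measure_mono hSsub) hmfin
    haveI : IsFiniteMeasure (μ.restrict S) :=
      ⟨by rw [Measure.restrict_apply_univ]; exact hμS_fin⟩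
    have hws : AEStronglyMeasurable w (μ.restrict S) :=
      (hint x r).aestronglyMeasurable.mono_measure (Measure.restrict_mono hSsub le_rfl)
    have hwqS : IntegrableOn (fun y => w y ^ q) S μ := (hintq x r).mono_set hSsub
    have hmemw : MemLp w (ENNReal.ofReal q) (μ.restrict S) := by
      have hq0'' : ENNReal.ofReal q ≠ 0 := by
        simp [ENNReal.ofReal_eq_zero, not_le, hq0]
      have hqt : ENNReal.ofReal q ≠ ⊤ := ENNReal.ofReal_ne_top
      rw [← memLp_norm_rpow_iff hws hq0'' hqt]
      rw [ENNReal.div_self hq0'' hqt, ENNReal.toReal_ofReal hq0.le]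
      rw [memLp_one_iff_integrable]
      apply hwqS.congr
      filter_upwards with y
      rw [Real.norm_of_nonneg (hw y)]
    have hmem1 : MemLp (fun _ : X => (1:ℝ)) (ENNReal.ofReal p) (μ.restrict S) :=
      memLp_const 1
    have hholder : ∫ y in S, w y ∂μ ≤
        (∫ y in S, w y ^ q ∂μ) ^ (1/q) * (μ S).toReal ^ (1/p) := by
      have := integral_mul_le_Lp_mul_Lq_of_nonneg hconj
        (f := w) (g := fun _ => (1:ℝ)) (μ := μ.restrict S)
        (Filter.Eventually.of_forall fun y => hw y)
        (Filter.Eventually.of_forall fun _ => zero_le_one) hmemw hmem1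
      simpa [Real.one_rpow, Measure.restrict_apply_univ, Measure.real] using this
    -- bound the two factors
    have hIqS : (∫ y in S, w y ^ q ∂μ) ≤ Iq :=
      setIntegral_mono_set (hintq x r)
        (Filter.Eventually.of_forall fun y => Real.rpow_nonneg (hw y) q)
        (HasSubset.Subset.eventuallyLE hSsub)
    have hμS : (μ S).toReal ≤ B₀ * ε * m := by
      have h := hAnn x r τ hr hτ0 hτ1
      have h1τ : (1:ℝ) - τ = ε := by simp [hτ_def]
      rw [h1τ] at h
      have := ENNReal.toReal_mono (by finiteness) h
      rwa [ENNReal.toReal_mul, ENNReal.toReal_ofReal (by positivity)] at this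
    -- reverse Hölder consequence
    have hT : Iq ^ (1/q) * m ^ (1/p) ≤ C * I := by
      have hm1 : m ^ (1/q) * m ^ (1/p) = m := by
        have : 1/q + 1/p = 1 := by
          rw [one_div, one_div]; exact hconj.inv_add_inv_eq_one
        rw [← Real.rpow_add hm0, this, Real.rpow_one]
      have hmq : m ^ (1/q) ≠ 0 := (Real.rpow_pos_of_pos hm0 _).ne'
      have e : (m⁻¹ * Iq) ^ (1/q) * m = Iq ^ (1/q) * m ^ (1/p) := by
        rw [Real.mul_rpow (by positivity) hIq0, Real.inv_rpow hm0.le]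
        calc (m ^ (1/q))⁻¹ * Iq ^ (1/q) * m
            = (m ^ (1/q))⁻¹ * Iq ^ (1/q) * (m ^ (1/q) * m ^ (1/p)) := by rw [hm1]
          _ = (m ^ (1/q))⁻¹ * m ^ (1/q) * (Iq ^ (1/q) * m ^ (1/p)) := by ring
          _ = Iq ^ (1/q) * m ^ (1/p) := by rw [inv_mul_cancel₀ hmq, one_mul]
      rw [← e]
      calc (m⁻¹ * Iq) ^ (1/q) * m ≤ (C * (m⁻¹ * I)) * m :=
            mul_le_mul_of_nonneg_right (hRH x r hr) hm0.le
        _ = C * I := by field_simp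
    -- combine
    have hannbound : ∫ y in S, w y ∂μ ≤ (1/2) * I := by
      calc ∫ y in S, w y ∂μ
          ≤ (∫ y in S, w y ^ q ∂μ) ^ (1/q) * (μ S).toReal ^ (1/p) := hholder
        _ ≤ Iq ^ (1/q) * (B₀ * ε * m) ^ (1/p) := by
            apply mul_le_mul
            · exact Real.rpow_le_rpow
                (integral_nonneg fun y => Real.rpow_nonneg (hw y) q)
                hIqS hq0'
            · exact Real.rpow_le_rpow ENNReal.toReal_nonneg hμS hp0'
            · positivity
            · positivity
        _ = (B₀ * ε) ^ (1/p) * (Iq ^ (1/q) * m ^ (1/p)) := by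
            rw [Real.mul_rpow (by positivity) hm0.le]; ring
        _ ≤ (B₀ * ε) ^ (1/p) * (C * I) := by
            apply mul_le_mul_of_nonneg_left hT (by positivity)
        _ = (C * (B₀ * ε) ^ (1/p)) * I := by ring
        _ ≤ (1/2) * I := mul_le_mul_of_nonneg_right hsmall hI0
    have hτnonneg : 0 ≤ ∫ y in ball x (τ * r), w y ∂μ := integral_nonneg fun y => hw y
    linarith
  -- iterate
  have iter : ∀ (n : ℕ) (x : X) (r : ℝ), 0 < r →
      ∫ y in ball x r, w y ∂μ ≤ 2^n * ∫ y in ball x (τ^n * r), w y ∂μ := by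
    intro n
    induction n with
    | zero => intro x r hr; simp
    | succ n ih =>
      intro x r hr
      calc ∫ y in ball x r, w y ∂μ ≤ 2^n * ∫ y in ball x (τ^n * r), w y ∂μ := ih x r hr
        _ ≤ 2^n * (2 * ∫ y in ball x (τ * (τ^n * r)), w y ∂μ) := by
            apply mul_le_mul_of_nonneg_left (key x _ (by positivity)) (by positivity)
        _ = 2^(n+1) * ∫ y in ball x (τ^(n+1) * r), w y ∂μ := by
            rw [show τ * (τ^n * r) = τ^(n+1) * r by ring]; ring
  obtain ⟨n, hn⟩ := exists_pow_lt_of_lt_one (by norm_num : (0:ℝ) < 1/2) hτ1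
  refine ⟨2^n, by positivity, fun x r hr => ?_⟩
  calc ∫ y in ball x (2 * r), w y ∂μ
      ≤ 2^n * ∫ y in ball x (τ^n * (2 * r)), w y ∂μ := iter n x (2*r) (by linarith)
    _ ≤ 2^n * ∫ y in ball x r, w y ∂μ := by
        apply mul_le_mul_of_nonneg_left _ (by positivity)
        apply setIntegral_mono_set (hint x r)
          (Filter.Eventually.of_forall fun y => hw y)
        apply HasSubset.Subset.eventuallyLE
        apply ball_subset_ball
        nlinarith [pow_le_one₀ hτ0.le hτ1.le (n := n)]
end

section
/- Let w be a nonnegative measurable function on a metric measure space such that for some p > 1 and C > 0, every ball B satisfies (⨍_B w dμ)(⨍_B w^{-1/(p-1)} dμ)^{p-1} ≤ C (the A_p condition). Then for every ball B and every measurable subset E ⊆ B, μ(E)/μ(B) ≤ C^{1/p} (∫_E w dμ / ∫_B w dμ)^{1/p}. -/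
open Metric MeasureTheory

/-- If `w` satisfies the `A_p` condition
`(⨍_B w)(⨍_B w^{-1/(p-1)})^{p-1} ≤ C` on every ball, then for every ball `B` and every measurable
subset `E ⊆ B`, `μ(E)/μ(B) ≤ C^{1/p} (∫_E w / ∫_B w)^{1/p}`. -/
theorem stmt5 {X : Type*} [MetricSpace X] [MeasurableSpace X] (μ : Measure X)
    (w : X → ℝ) (p C : ℝ) (hp : 1 < p) (hC : 0 < C)
    (hw : ∀ x, 0 < w x)
    (hball : ∀ (x : X) (r : ℝ), 0 < r → 0 < μ (ball x r) ∧ μ (ball x r) < ⊤)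
    (hint : ∀ (x : X) (r : ℝ), IntegrableOn w (ball x r) μ)
    (hint' : ∀ (x : X) (r : ℝ),
      IntegrableOn (fun y => w y ^ (-(1 / (p - 1)))) (ball x r) μ)
    (hAp : ∀ (x : X) (r : ℝ), 0 < r →
      ((μ (ball x r)).toReal⁻¹ * ∫ y in ball x r, w y ∂μ) *
        ((μ (ball x r)).toReal⁻¹ *
          ∫ y in ball x r, w y ^ (-(1 / (p - 1))) ∂μ) ^ (p - 1) ≤ C) :
    ∀ (x : X) (r : ℝ), 0 < r → ∀ E ⊆ ball x r, MeasurableSet E →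
      (μ E).toReal / (μ (ball x r)).toReal ≤
        C ^ (1 / p) *
          ((∫ y in E, w y ∂μ) / ∫ y in ball x r, w y ∂μ) ^ (1 / p) := by
  intro x r hr E hE hEm
  set B := ball x r with hB
  have hp0 : (0:ℝ) < p := lt_trans one_pos hp
  have hp1 : (0:ℝ) < p - 1 := by linarith
  set q : ℝ := p / (p - 1) with hq
  have hq1 : 1 < q := (one_lt_div hp1).2 (by linarith)
  have hq0 : (0:ℝ) < q := lt_trans one_pos hq1
  have hpq : p.HolderConjugate q := (Real.holderConjugate_iff_eq_conjExponent hp).2 hq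
  obtain ⟨hBpos, hBfin⟩ := hball x r hr
  have hMpos : 0 < (μ B).toReal := ENNReal.toReal_pos hBpos.ne' hBfin.ne
  have hwB : IntegrableOn w B μ := hint x r
  have hwE : IntegrableOn w E μ := hwB.mono_set hE
  have hw'B : IntegrableOn (fun y => w y ^ (-(1 / (p - 1)))) B μ := hint' x r
  have hw'E : IntegrableOn (fun y => w y ^ (-(1 / (p - 1)))) E μ := hw'B.mono_set hE
  have hApos : 0 < ∫ y in B, w y ∂μ := by
    rw [setIntegral_pos_iff_support_of_nonneg_ae
      (Filter.Eventually.of_forall fun y => (hw y).le) hwB]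
    have : Function.support w = Set.univ := by
      ext y; simp [Function.support, (hw y).ne']
    rw [this]; simpa using hBpos
  have hNnn : 0 ≤ ∫ y in E, w y ∂μ :=
    integral_nonneg fun y => (hw y).le
  have hSnnE : 0 ≤ ∫ y in E, w y ^ (-(1 / (p - 1))) ∂μ :=
    integral_nonneg fun y => (Real.rpow_pos_of_pos (hw y) _).le
  have hSnnB : 0 ≤ ∫ y in B, w y ^ (-(1 / (p - 1))) ∂μ :=
    integral_nonneg fun y => (Real.rpow_pos_of_pos (hw y) _).le
  -- Memℒp facts for Hölder on E
  have hf_meas : AEStronglyMeasurable w (μ.restrict E) := hwE.aestronglyMeasurable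
  have e1 : ENNReal.ofReal (1/p) = (ENNReal.ofReal p)⁻¹ := by
    rw [one_div, ENNReal.ofReal_inv_of_pos hp0]
  have e2 : ENNReal.ofReal (1/q) = (ENNReal.ofReal q)⁻¹ := by
    rw [one_div, ENNReal.ofReal_inv_of_pos hq0]
  have hf : MemLp (fun y => w y ^ (1/p)) (ENNReal.ofReal p) (μ.restrict E) := by
    have h := (memLp_norm_rpow_iff (p := (1 : ENNReal)) (q := ENNReal.ofReal (1/p))
      hf_meas (ne_of_gt (ENNReal.ofReal_pos.2 (by positivity))) (by simp)).2
      (memLp_one_iff_integrable.2 hwE)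
    have e1' : (1 : ENNReal) / ENNReal.ofReal (1/p) = ENNReal.ofReal p := by
      rw [e1, one_div, inv_inv]
    rw [e1'] at h
    refine h.congr_norm
      ((hf_meas.aemeasurable.pow aemeasurable_const).aestronglyMeasurable)
      (Filter.Eventually.of_forall fun y => ?_)
    rw [ENNReal.toReal_ofReal (by positivity), Real.norm_eq_abs (w y), abs_of_pos (hw y)]
  have hg_meas : AEStronglyMeasurable (fun y => w y ^ (-(1 / (p - 1)))) (μ.restrict E) :=
    hw'E.aestronglyMeasurable
  have hg : MemLp (fun y => w y ^ (-(1/p))) (ENNReal.ofReal q) (μ.restrict E) := by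
    have h := (memLp_norm_rpow_iff (p := (1 : ENNReal)) (q := ENNReal.ofReal (1/q))
      hg_meas (ne_of_gt (ENNReal.ofReal_pos.2 (by positivity))) (by simp)).2
      (memLp_one_iff_integrable.2 hw'E)
    have e2' : (1 : ENNReal) / ENNReal.ofReal (1/q) = ENNReal.ofReal q := by
      rw [e2, one_div, inv_inv]
    rw [e2'] at h
    refine h.congr_norm
      ((hf_meas.aemeasurable.pow aemeasurable_const).aestronglyMeasurable)
      (Filter.Eventually.of_forall fun y => ?_)
    rw [ENNReal.toReal_ofReal (by positivity),
      Real.norm_of_nonneg (Real.rpow_nonneg (hw y).le _), ← Real.rpow_mul (hw y).le]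
    congr 2
    rw [hq]; field_simp
  -- Hölder's inequality on E
  have holder := integral_mul_le_Lp_mul_Lq_of_nonneg hpq
    (Filter.Eventually.of_forall fun y => (Real.rpow_pos_of_pos (hw y) _).le)
    (Filter.Eventually.of_forall fun y => (Real.rpow_pos_of_pos (hw y) _).le) hf hg
  have hlhs : (∫ y in E, w y ^ (1/p) * w y ^ (-(1/p)) ∂μ) = (μ E).toReal := by
    have h1 : ∀ y, w y ^ (1/p) * w y ^ (-(1/p)) = 1 := fun y => by
      rw [← Real.rpow_add (hw y)]; simp
    simp_rw [h1]
    simp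
    rfl
  have hfp : (∫ y in E, (w y ^ (1/p)) ^ p ∂μ) = ∫ y in E, w y ∂μ := by
    refine integral_congr_ae (Filter.Eventually.of_forall fun y => ?_)
    show (w y ^ (1/p)) ^ p = w y
    rw [← Real.rpow_mul (hw y).le, one_div, inv_mul_cancel₀ hp0.ne', Real.rpow_one]
  have hgq : (∫ y in E, (w y ^ (-(1/p))) ^ q ∂μ) = ∫ y in E, w y ^ (-(1 / (p - 1))) ∂μ := by
    refine integral_congr_ae (Filter.Eventually.of_forall fun y => ?_)
    show (w y ^ (-(1/p))) ^ q = w y ^ (-(1 / (p - 1)))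
    rw [← Real.rpow_mul (hw y).le]
    congr 1
    rw [hq]; field_simp
  rw [hlhs, hfp, hgq] at holder
  -- monotonicity of the dual integral
  have hSmono : (∫ y in E, w y ^ (-(1 / (p - 1))) ∂μ) ≤ ∫ y in B, w y ^ (-(1 / (p - 1))) ∂μ :=
    setIntegral_mono_set hw'B
      (Filter.Eventually.of_forall fun y => (Real.rpow_pos_of_pos (hw y) _).le)
      (HasSubset.Subset.eventuallyLE hE)
  -- notation
  set M := (μ B).toReal with hM
  set A := (∫ y in B, w y ∂μ) with hA
  set N := (∫ y in E, w y ∂μ) with hN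
  set S := (∫ y in B, w y ^ (-(1 / (p - 1))) ∂μ) with hS
  -- rearrange the A_p condition
  have hApC := hAp x r hr
  have hSbound : S ^ (p - 1) ≤ C * M ^ p / A := by
    have hMinv : (0:ℝ) < M⁻¹ := inv_pos.2 hMpos
    have h1 : (M⁻¹ * S) ^ (p - 1) ≤ C / (M⁻¹ * A) := by
      rw [le_div_iff₀ (by positivity)]
      calc (M⁻¹ * S) ^ (p - 1) * (M⁻¹ * A) = (M⁻¹ * A) * (M⁻¹ * S) ^ (p - 1) := by ring
        _ ≤ C := hApC
    have h2 : (M⁻¹ * S) ^ (p - 1) = M⁻¹ ^ (p - 1) * S ^ (p - 1) :=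
      Real.mul_rpow hMinv.le hSnnB
    rw [h2] at h1
    have h3 : S ^ (p - 1) = M ^ (p - 1) * (M⁻¹ ^ (p - 1) * S ^ (p - 1)) := by
      rw [← mul_assoc, ← Real.mul_rpow hMpos.le hMinv.le, mul_inv_cancel₀ hMpos.ne',
        Real.one_rpow, one_mul]
    rw [h3]
    calc M ^ (p - 1) * (M⁻¹ ^ (p - 1) * S ^ (p - 1))
        ≤ M ^ (p - 1) * (C / (M⁻¹ * A)) := by
          exact mul_le_mul_of_nonneg_left h1 (Real.rpow_nonneg hMpos.le _)
      _ = C * M ^ p / A := by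
          have hMp : M ^ p = M ^ (p - 1) * M := by
            calc M ^ p = M ^ (p - 1 + 1) := by norm_num
              _ = M ^ (p - 1) * M ^ (1:ℝ) := Real.rpow_add hMpos _ _
              _ = M ^ (p - 1) * M := by rw [Real.rpow_one]
          rw [hMp]
          field_simp
  -- bound S^(1/q)
  have hS1q : S ^ (1/q) ≤ C ^ (1/p) * M / A ^ (1/p) := by
    have h1 : S ^ (1/q) = (S ^ (p - 1)) ^ (1/p) := by
      rw [← Real.rpow_mul hSnnB]
      congr 1
      rw [hq]; field_simp
    rw [h1]
    have h2 : (S ^ (p - 1)) ^ (1/p) ≤ (C * M ^ p / A) ^ (1/p) :=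
      Real.rpow_le_rpow (Real.rpow_nonneg hSnnB _) hSbound (by positivity)
    refine h2.trans_eq ?_
    rw [Real.div_rpow (by positivity) hApos.le, Real.mul_rpow hC.le (by positivity),
      ← Real.rpow_mul hMpos.le, mul_one_div, div_self hp0.ne', Real.rpow_one]
  -- conclusion
  have hq1p : 1/q = 1 - 1/p := by rw [hq]; field_simp
  have main : (μ E).toReal ≤ N ^ (1/p) * (C ^ (1/p) * M / A ^ (1/p)) := by
    calc (μ E).toReal ≤ N ^ (1/p) * (∫ y in E, w y ^ (-(1 / (p - 1))) ∂μ) ^ (1/q) := holder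
      _ ≤ N ^ (1/p) * S ^ (1/q) := by
          exact mul_le_mul_of_nonneg_left
            (Real.rpow_le_rpow hSnnE hSmono (by positivity)) (Real.rpow_nonneg hNnn _)
      _ ≤ N ^ (1/p) * (C ^ (1/p) * M / A ^ (1/p)) :=
          mul_le_mul_of_nonneg_left hS1q (Real.rpow_nonneg hNnn _)
  rw [div_le_iff₀ hMpos]
  calc (μ E).toReal ≤ N ^ (1/p) * (C ^ (1/p) * M / A ^ (1/p)) := main
    _ = C ^ (1/p) * (N / A) ^ (1/p) * M := by
        rw [Real.div_rpow hNnn hApos.le]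
        field_simp
end

section
/- Let (M,g) be a smooth compact Riemannian manifold and f, f' : M → ℝ be continuous functions, and let g_f = e^{2f} g. If the Riemannian distance d_f associated to g_f satisfies, for every x ∈ M and a.e. y, that y ↦ d_f(x,y) is Lipschitz with |∇ d_f(x,·)|_{g_0} = e^{f} a.e., then whenever ∫_M e^{pf} dμ_0 ≤ A for some p > n (n = dim M), the function d_f(x,·) lies in the Sobolev space W^{1,p}(M,g_0) with ‖d_f(x,·)‖_{W^{1,p}} ≤ C A for a constant C depending only on (M,g_0) and p, and consequently d_f(x,·) is (1 - n/p)-Hölder continuous with respect to d_0 with Hölder constant depending only on (M,g_0), p, A. -/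
open Metric MeasureTheory Filter
open scoped NNReal

/-- The pointwise (local) Lipschitz constant of `u` at `y`, playing the role of `|∇u|(y)`. -/
noncomputable def localLip {X : Type*} [MetricSpace X] (u : X → ℝ) (y : X) : ℝ :=
  Filter.limsup (fun z => |u z - u y| / dist z y) (nhdsWithin y {y}ᶜ)

/-- On a closed `n`-manifold `(M, g₀)` (here abstracted as a compact metric
measure space, with `|∇u|` given by the local Lipschitz constant and the Morrey–Sobolev embedding
`W^{1,p} ↪ C^{1-n/p}` for `p > n` assumed as a hypothesis): if the conformal distance `d_f(x,·)`
is Lipschitz with `|∇ d_f(x,·)| = e^f` a.e., and `∫_M e^{pf} dμ₀ ≤ A`, then `d_f(x,·)` lies in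
`W^{1,p}` with norm at most `C·A` for a constant `C` depending only on `(M,g₀)` and `p`, and
`d_f(x,·)` is `(1 - n/p)`-Hölder with constant depending only on `(M,g₀), p, A`. -/
theorem stmt6 {M : Type*} [MetricSpace M] [CompactSpace M] [MeasurableSpace M]
    (μ₀ : Measure M) (n : ℕ) (p A : ℝ) (hn : 1 ≤ n) (hp : (n : ℝ) < p) (hA : 0 < A)
    (f : M → ℝ) (hf : Continuous f)
    (df : M → M → ℝ)
    (hLip : ∀ x : M, ∃ L : ℝ≥0, LipschitzWith L (df x))
    (hzero : ∀ x, df x x = 0)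
    (hGrad : ∀ x : M, ∀ᵐ y ∂μ₀, localLip (df x) y = Real.exp (f y))
    -- the Morrey/Sobolev embedding `W^{1,p} ↪ C^{1-n/p}` on `(M, g₀)`, with constant `CM`:
    (CM : ℝ) (hCM : 0 < CM)
    (hMorrey : ∀ u : M → ℝ, (∃ L : ℝ≥0, LipschitzWith L u) → ∀ y z : M,
      |u y - u z| ≤
        CM * (∫ v, localLip u v ^ p ∂μ₀) ^ (1 / p) * dist y z ^ (1 - (n : ℝ) / p))
    (hint : Integrable (fun y => Real.exp (p * f y)) μ₀)
    (hbound : ∫ y, Real.exp (p * f y) ∂μ₀ ≤ A) :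
    ∃ C > 0, ∀ x : M,
      ((∫ y, |df x y| ^ p ∂μ₀) ^ (1 / p) +
        (∫ y, localLip (df x) y ^ p ∂μ₀) ^ (1 / p) ≤ C * A) ∧
      ∀ y z : M, |df x y - df x z| ≤ C * dist y z ^ (1 - (n : ℝ) / p) := by
  have hn1 : (1:ℝ) ≤ (n:ℝ) := by exact_mod_cast hn
  have hp0 : (0:ℝ) < p := by linarith
  rcases isEmpty_or_nonempty M with hM | hM
  · exact ⟨1, one_pos, fun x => (IsEmpty.false x).elim⟩
  obtain ⟨y₀, -, hy₀⟩ := isCompact_univ.exists_isMinOn Set.univ_nonempty hf.continuousOn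
  set c := Real.exp (p * f y₀) with hc
  have hc0 : 0 < c := Real.exp_pos _
  have hcle : ∀ y, c ≤ Real.exp (p * f y) := fun y =>
    Real.exp_le_exp.2 (mul_le_mul_of_nonneg_left (hy₀ (Set.mem_univ y)) hp0.le)
  have hconst : Integrable (fun _ : M => c) μ₀ :=
    hint.mono' aestronglyMeasurable_const (ae_of_all _ fun y => by
      rw [Real.norm_eq_abs, abs_of_pos hc0]; exact hcle y)
  have hfin : μ₀ Set.univ < ⊤ := by
    rcases integrable_const_iff.mp hconst with h | h
    · exact absurd h hc0.ne'
    · exact h.measure_univ_lt_top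
  have : IsFiniteMeasure μ₀ := ⟨hfin⟩
  set m := (μ₀ Set.univ).toReal with hm
  have hm0 : (0:ℝ) ≤ m := ENNReal.toReal_nonneg
  set α := 1 - (n:ℝ)/p with hα
  have hα0 : 0 ≤ α := by
    have : (n:ℝ)/p ≤ 1 := (div_le_one hp0).2 hp.le
    simp only [hα]; linarith
  set D := Metric.diam (Set.univ : Set M) with hD
  have hD0 : 0 ≤ D := Metric.diam_nonneg
  have hI : ∀ x : M, ∫ v, localLip (df x) v ^ p ∂μ₀ = ∫ y, Real.exp (p * f y) ∂μ₀ := by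
    intro x
    refine integral_congr_ae ?_
    filter_upwards [hGrad x] with y hy
    rw [hy, ← Real.exp_mul, mul_comm]
  have hIA : ∀ x : M, ∫ v, localLip (df x) v ^ p ∂μ₀ ≤ A := fun x => (hI x) ▸ hbound
  have hInn : ∀ x : M, 0 ≤ ∫ v, localLip (df x) v ^ p ∂μ₀ := fun x =>
    (hI x) ▸ integral_nonneg fun y => (Real.exp_pos _).le
  have hA1p : (0:ℝ) ≤ A ^ (1/p) := Real.rpow_nonneg hA.le _
  have hMor : ∀ x y z : M, |df x y - df x z| ≤ CM * A ^ (1/p) * dist y z ^ α := by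
    intro x y z
    refine (hMorrey (df x) (hLip x) y z).trans ?_
    exact mul_le_mul_of_nonneg_right
      (mul_le_mul_of_nonneg_left
        (Real.rpow_le_rpow (hInn x) (hIA x) (by positivity)) hCM.le)
      (Real.rpow_nonneg dist_nonneg _)
  set B := CM * A ^ (1/p) * D ^ α with hB
  have hB0 : 0 ≤ B := by positivity
  have hdfB : ∀ x y : M, |df x y| ≤ B := by
    intro x y
    have h1 := hMor x y x
    rw [hzero, sub_zero] at h1
    refine h1.trans ?_
    exact mul_le_mul_of_nonneg_left
      (Real.rpow_le_rpow dist_nonneg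
        (Metric.dist_le_diam_of_mem isCompact_univ.isBounded (Set.mem_univ _) (Set.mem_univ _))
        hα0)
      (by positivity)
  have hint1 : ∀ x : M, ∫ y, |df x y| ^ p ∂μ₀ ≤ m * B ^ p := by
    intro x
    have := integral_mono_of_nonneg (f := fun y => |df x y| ^ p) (g := fun _ => B ^ p)
      (ae_of_all _ fun y => Real.rpow_nonneg (abs_nonneg _) _)
      (integrable_const (μ := μ₀) (B ^ p))
      (ae_of_all _ fun y => Real.rpow_le_rpow (abs_nonneg _) (hdfB x y) hp0.le)
    rwa [integral_const, smul_eq_mul] at this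
  set T := m ^ (1/p) * B + A ^ (1/p) with hT
  have hT0 : 0 ≤ T := by positivity
  set C := max (T / A) (CM * A ^ (1/p)) + 1 with hC
  have hC0 : 0 < C := by
    have h1 : 0 ≤ T / A := div_nonneg hT0 hA.le
    have h2 := le_max_left (T / A) (CM * A ^ (1/p))
    simp only [hC]; linarith
  have hTC : T ≤ C * A := by
    have h2 : T / A ≤ C := by
      have := le_max_left (T / A) (CM * A ^ (1/p)); simp only [hC]; linarith
    calc T = (T / A) * A := by field_simp
      _ ≤ C * A := mul_le_mul_of_nonneg_right h2 hA.le
  have hCMC : CM * A ^ (1/p) ≤ C := by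
    have := le_max_right (T / A) (CM * A ^ (1/p)); simp only [hC]; linarith
  refine ⟨C, hC0, fun x => ⟨?_, ?_⟩⟩
  · refine le_trans (add_le_add ?_ (Real.rpow_le_rpow (hInn x) (hIA x) (by positivity))) hTC
    have h1 : (∫ y, |df x y| ^ p ∂μ₀) ^ (1/p) ≤ (m * B ^ p) ^ (1/p) :=
      Real.rpow_le_rpow (integral_nonneg fun y => Real.rpow_nonneg (abs_nonneg _) _)
        (hint1 x) (by positivity)
    refine h1.trans_eq ?_
    rw [Real.mul_rpow hm0 (Real.rpow_nonneg hB0 _), one_div,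
      Real.rpow_rpow_inv hB0 hp0.ne', ← one_div]
  · intro y z
    exact (hMor x y z).trans
      (mul_le_mul_of_nonneg_right hCMC (Real.rpow_nonneg dist_nonneg _))
end
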